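/- Let n ≥ 4 and let A₁ ≥ A₂ ≥ … ≥ Aₙ > 0 be real numbers with A₁ < A₂ + … + Aₙ. Then there exist vectors v₁, …, vₙ in ℝ³ with ‖vᵢ‖ = Aᵢ, summing to zero, no two positively proportional, spanning ℝ³, and such that each vᵢ lies in the xy-plane (third coordinate zero) or in the yz-plane (first coordinate zero). -/

import Mathlib

/-- Two vectors are positively proportional if one is a positive scalar multiple
of the other. -/
def PosProportional {V : Type*} [AddCommGroup V] [Module ℝ V] (u v : V) : Prop :=
  ∃ c : ℝ, 0 < c ∧ u = c • v

lemma signs_lemma {ι : Type*} [DecidableEq ι] (S : Finset ι) (d : ι → ℝ) (c m : ℝ)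
    (hd : ∀ i ∈ S, 0 < d i ∧ d i ≤ c) :
    ∀ s : ℝ, m - c - ∑ i ∈ S, d i ≤ s → s ≤ m + c + ∑ i ∈ S, d i →
    ∃ σ : ι → ℝ, (∀ i, σ i = 1 ∨ σ i = -1) ∧
      m - c ≤ s - ∑ i ∈ S, σ i * d i ∧ s - ∑ i ∈ S, σ i * d i ≤ m + c := by
  induction S using Finset.induction_on with
  | empty =>
    intro s h1 h2
    exact ⟨fun _ => 1, fun _ => Or.inl rfl, by simpa using h1, by simpa using h2⟩
  | @insert a S ha ih =>
    intro s h1 h2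
    have hda := hd a (Finset.mem_insert_self a S)
    have hd' : ∀ i ∈ S, 0 < d i ∧ d i ≤ c := fun i hi => hd i (Finset.mem_insert_of_mem hi)
    rw [Finset.sum_insert ha] at h1 h2
    have hS : 0 ≤ ∑ i ∈ S, d i := Finset.sum_nonneg (fun i hi => (hd' i hi).1.le)
    by_cases hcase : m ≤ s
    · obtain ⟨σ, hσ, hl, hr⟩ := ih hd' (s - d a) (by linarith) (by linarith)
      refine ⟨Function.update σ a 1, ?_, ?_, ?_⟩
      · intro i
        by_cases h : i = a
        · subst h; simp
        · simp [Function.update_of_ne h, hσ i]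
      all_goals
        rw [Finset.sum_insert ha, Function.update_self,
          Finset.sum_congr rfl (fun i hi => by
            rw [Function.update_of_ne (by rintro rfl; exact ha hi)])]
        linarith
    · push_neg at hcase
      obtain ⟨σ, hσ, hl, hr⟩ := ih hd' (s + d a) (by linarith) (by linarith)
      refine ⟨Function.update σ a (-1), ?_, ?_, ?_⟩
      · intro i
        by_cases h : i = a
        · subst h; simp
        · simp [Function.update_of_ne h, hσ i]
      all_goals
        rw [Finset.sum_insert ha, Function.update_self,
          Finset.sum_congr rfl (fun i hi => by
            rw [Function.update_of_ne (by rintro rfl; exact ha hi)])]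
        linarith


set_option maxHeartbeats 4000000 in
/-- Given `n ≥ 4` reals `A₁ ≥ ⋯ ≥ Aₙ > 0` with `A₁ < A₂ + ⋯ + Aₙ`, there is a
fully equilibrated family in `ℝ³` with these norms such that every vector lies in
the `xy`-plane (third coordinate zero) or in the `yz`-plane (first coordinate zero). -/
theorem exists_fully_equilibrated_in_two_planes (n : ℕ) (hn : 4 ≤ n) (A : Fin n → ℝ)
    (hpos : ∀ i, 0 < A i) (hsorted : Antitone A)
    (hlt : A ⟨0, by omega⟩ < ∑ i ∈ Finset.univ.erase ⟨0, by omega⟩, A i) :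
    ∃ v : Fin n → EuclideanSpace ℝ (Fin 3),
      (∀ i, ‖v i‖ = A i) ∧
      (∑ i, v i) = 0 ∧
      (∀ i j, i ≠ j → ¬ PosProportional (v i) (v j)) ∧
      Submodule.span ℝ (Set.range v) = ⊤ ∧
      (∀ i, v i 2 = 0 ∨ v i 0 = 0) := by
  have h0n : 0 < n := by omega
  have h1n : 1 < n := by omega
  have h2n : 2 < n := by omega
  have h3n : 3 < n := by omega
  set i0 : Fin n := ⟨0, h0n⟩ with hi0_def
  set i1 : Fin n := ⟨1, h1n⟩ with hi1_def
  set i2 : Fin n := ⟨2, h2n⟩ with hi2_def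
  set i3 : Fin n := ⟨3, h3n⟩ with hi3_def
  set a0 := A i0 with ha0_def
  set a1 := A i1 with ha1_def
  set b1 := A i2 with hb1_def
  set b2 := A i3 with hb2_def
  set K : Finset (Fin n) := Finset.univ.filter (fun i => 4 ≤ i.val) with hK_def
  set D := ∑ i ∈ K, A i with hD_def
  have hKmem : ∀ i ∈ K, 4 ≤ i.val := by intro i hi; simpa [hK_def] using hi
  have hKne : ∀ i ∈ K, i ≠ i0 ∧ i ≠ i1 ∧ i ≠ i2 ∧ i ≠ i3 := by
    intro i hi
    have h4 := hKmem i hi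
    refine ⟨?_, ?_, ?_, ?_⟩ <;> (intro h; rw [h] at h4; simp [hi0_def, hi1_def, hi2_def, hi3_def] at h4)
  have hKd : ∀ i ∈ K, 0 < A i ∧ A i ≤ b2 := by
    intro i hi
    exact ⟨hpos i, hsorted (show i3 ≤ i by
      rw [Fin.le_def]; exact le_trans (by norm_num) (hKmem i hi))⟩
  have hD0 : 0 ≤ D := Finset.sum_nonneg (fun i hi => (hKd i hi).1.le)
  have ha0 : 0 < a0 := hpos i0
  have ha1 : 0 < a1 := hpos i1
  have hb1 : 0 < b1 := hpos i2
  have hb2 : 0 < b2 := hpos i3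
  have h01 : a1 ≤ a0 := hsorted (by rw [Fin.le_def]; norm_num)
  have h12 : b1 ≤ a1 := hsorted (by rw [Fin.le_def]; norm_num)
  have h23 : b2 ≤ b1 := hsorted (by rw [Fin.le_def]; norm_num)
  -- splitting lemma for sums
  have hfour : Finset.univ.filter (fun i : Fin n => ¬ 4 ≤ i.val) = {i0, i1, i2, i3} := by
    ext i
    simp only [Finset.mem_filter, Finset.mem_univ, true_and, Finset.mem_insert,
      Finset.mem_singleton, Fin.ext_iff, hi0_def, hi1_def, hi2_def, hi3_def]
    omega
  have hd01 : i0 ≠ i1 := by simp [Fin.ext_iff, hi0_def, hi1_def]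
  have hd02 : i0 ≠ i2 := by simp [Fin.ext_iff, hi0_def, hi2_def]
  have hd03 : i0 ≠ i3 := by simp [Fin.ext_iff, hi0_def, hi3_def]
  have hd12 : i1 ≠ i2 := by simp [Fin.ext_iff, hi1_def, hi2_def]
  have hd13 : i1 ≠ i3 := by simp [Fin.ext_iff, hi1_def, hi3_def]
  have hd23 : i2 ≠ i3 := by simp [Fin.ext_iff, hi2_def, hi3_def]
  have hsplit : ∀ f : Fin n → ℝ,
      ∑ i, f i = f i0 + f i1 + f i2 + f i3 + ∑ i ∈ K, f i := by
    intro f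
    rw [← Finset.sum_filter_add_sum_filter_not Finset.univ (fun i => 4 ≤ i.val) f, hfour]
    rw [show ({i0, i1, i2, i3} : Finset (Fin n)).sum f = f i0 + f i1 + f i2 + f i3 by
      rw [Finset.sum_insert (by simp [hd01, hd02, hd03]),
        Finset.sum_insert (by simp [hd12, hd13]),
        Finset.sum_insert (by simp [hd23]), Finset.sum_singleton]; ring]
    ring
  have hmain : a0 < a1 + b1 + b2 + D := by
    have h1 : A i0 + ∑ i ∈ Finset.univ.erase i0, A i = ∑ i, A i :=
      Finset.add_sum_erase _ A (Finset.mem_univ i0)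
    have h2 := hsplit A
    have hlt' : A i0 < ∑ i ∈ Finset.univ.erase i0, A i := hlt
    rw [← ha0_def, ← ha1_def, ← hb1_def, ← hb2_def, ← hD_def] at h2
    linarith
  -- the interval for s
  set L := max (a0 - a1) (max (b1 - b2 - D) 0) with hL_def
  set U := min (a0 + a1) (b1 + b2 + D) with hU_def
  have hLU : L < U := by
    rw [hL_def, hU_def]
    rw [max_lt_iff, max_lt_iff, lt_min_iff, lt_min_iff, lt_min_iff]
    refine ⟨⟨by linarith, by linarith⟩, ⟨by linarith, by linarith⟩, by linarith, by linarith⟩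
  set s0 := (L + U)/2 with hs0_def
  obtain ⟨η, hη_def⟩ : ∃ x:ℝ, x = min ((U - L)/4) (b2/2) := ⟨_, rfl⟩
  have hη : 0 < η := by rw [hη_def]; exact lt_min (by linarith) (by linarith)
  have hηb2 : η ≤ b2/2 := by rw [hη_def]; exact min_le_right _ _
  have hηUL : η ≤ (U - L)/4 := by rw [hη_def]; exact min_le_left _ _
  -- choose signs
  obtain ⟨σ, hσpm, hvl, hvr⟩ := signs_lemma K A b2 b1 hKd ((L+U)/2)
    (by
      have : b1 - b2 - D ≤ L := le_max_of_le_right (le_max_left _ _)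
      rw [← hD_def]; linarith)
    (by
      have : U ≤ b1 + b2 + D := min_le_right _ _
      rw [← hD_def]; linarith)
  obtain ⟨Sg, hSg_def⟩ : ∃ x:ℝ, x = ∑ i ∈ K, σ i * A i := ⟨_, rfl⟩
  rw [← hSg_def] at hvl hvr
  obtain ⟨s, hs_def⟩ : ∃ x:ℝ, x = if (L+U)/2 - Sg ≤ b1 then (L+U)/2 + η else (L+U)/2 - η :=
    ⟨_, rfl⟩
  obtain ⟨v', hv'_def⟩ : ∃ x:ℝ, x = s - Sg := ⟨_, rfl⟩
  have hσne : ∀ i, σ i ≠ 0 := by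
    intro i; rcases hσpm i with h | h <;> rw [h] <;> norm_num
  have hσsq : ∀ i, σ i ^ 2 = 1 := by
    intro i; rcases hσpm i with h | h <;> rw [h] <;> norm_num
  have hσabs : ∀ i, |σ i| = 1 := by
    intro i; rcases hσpm i with h | h <;> rw [h] <;> norm_num
  have hv'b : b1 - b2 + η ≤ v' ∧ v' ≤ b1 + b2 - η := by
    rw [hv'_def, hs_def]
    by_cases h : (L+U)/2 - Sg ≤ b1
    · rw [if_pos h]; constructor <;> linarith
    · rw [if_neg h]; push_neg at h; constructor <;> linarith
  have hsL : L < s ∧ s < U := by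
    rw [hs_def]
    by_cases h : (L+U)/2 - Sg ≤ b1 <;> [rw [if_pos h]; rw [if_neg h]] <;>
      constructor <;> linarith
  have hsa : a0 - a1 < s := lt_of_le_of_lt (le_max_left _ _) hsL.1
  have hsb : s < a0 + a1 := lt_of_lt_of_le hsL.2 (min_le_left _ _)
  have hs0' : 0 < s := lt_of_le_of_lt (le_max_of_le_right (le_max_right _ _)) hsL.1
  -- small parameters
  have hbb0 : (0:ℝ) < b1 + b2 := by linarith
  obtain ⟨bL, hbL_def⟩ : ∃ x:ℝ, x = Real.sqrt (η^3*(b1+b2)) / (4*(b1+b2)^2) := ⟨_, rfl⟩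
  have hbL : 0 < bL := by
    rw [hbL_def]
    exact div_pos (Real.sqrt_pos.mpr (mul_pos (pow_pos hη 3) hbb0))
      (mul_pos (by norm_num) (pow_pos hbb0 2))
  have hbLsq : bL^2 * (16*(b1+b2)^4) = η^3*(b1+b2) := by
    rw [hbL_def, div_pow, Real.sq_sqrt (mul_nonneg (pow_nonneg hη.le 3) hbb0.le)]
    rw [div_mul_eq_mul_div, div_eq_iff (ne_of_gt (pow_pos (mul_pos (by norm_num) (pow_pos hbb0 2)) 2))]
    ring
  obtain ⟨aU, haU_def⟩ : ∃ x:ℝ, x = 1/2 + b1^2/η^2 := ⟨_, rfl⟩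
  have hb1η : (0:ℝ) ≤ b1^2/η^2 := by positivity
  have haU0 : (0:ℝ) < aU := by rw [haU_def]; linarith only [hb1η]
  obtain ⟨δ, hδ_def⟩ : ∃ x:ℝ, x = min (η/4) (min (η^2/(4*b1+4)) (bL*η/(4*(aU+1)))) := ⟨_, rfl⟩
  have hδ0 : 0 < δ := by
    rw [hδ_def]
    exact lt_min (by linarith only [hη])
      (lt_min (div_pos (pow_pos hη 2) (by linarith only [hb1]))
        (div_pos (mul_pos hbL hη) (by linarith only [haU0])))
  have hδ1 : δ ≤ η/4 := by rw [hδ_def]; exact min_le_left _ _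
  have hδ2 : δ ≤ η^2/(4*b1+4) := by
    rw [hδ_def]; exact le_trans (min_le_right _ _) (min_le_left _ _)
  have hδ3 : δ ≤ bL*η/(4*(aU+1)) := by
    rw [hδ_def]; exact le_trans (min_le_right _ _) (min_le_right _ _)
  obtain ⟨M, hM_def⟩ : ∃ x:ℝ, x = bL*η/4 := ⟨_, rfl⟩
  have hM0 : 0 < M := by rw [hM_def]; exact div_pos (mul_pos hbL hη) (by norm_num)
  obtain ⟨qm, hqm_def⟩ : ∃ x:ℝ, x = min (1/2) (min (M/(8*(b1+1))) (δ/(2*D+2))) := ⟨_, rfl⟩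
  have hqm0 : 0 < qm := by
    rw [hqm_def]
    exact lt_min (by norm_num)
      (lt_min (div_pos hM0 (by linarith only [hb1])) (div_pos hδ0 (by linarith only [hD0])))
  have hqm1 : qm ≤ 1/2 := by rw [hqm_def]; exact min_le_left _ _
  have hqm2 : qm ≤ M/(8*(b1+1)) := by
    rw [hqm_def]; exact le_trans (min_le_right _ _) (min_le_left _ _)
  have hqm3 : qm ≤ δ/(2*D+2) := by
    rw [hqm_def]; exact le_trans (min_le_right _ _) (min_le_right _ _)
  obtain ⟨qq, hqq_def⟩ : ∃ f : Fin n → ℝ, f = fun i => qm*(i.val+1)/(n+1) := ⟨_, rfl⟩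
  have hqq_at : ∀ i : Fin n, qq i = qm*(i.val+1)/(n+1) := fun i => by rw [hqq_def]
  have hnpos : (0:ℝ) < (n:ℝ) + 1 := by positivity
  have hqqpos : ∀ i : Fin n, 0 < qq i := by
    intro i
    rw [hqq_at i]
    exact div_pos (mul_pos hqm0 (by positivity)) hnpos
  have hqqle : ∀ i : Fin n, qq i ≤ qm := by
    intro i
    rw [hqq_at i, div_le_iff₀ hnpos]
    have h1 : (i.val:ℝ) + 1 ≤ (n:ℝ) + 1 := by
      have := i.isLt; exact_mod_cast Nat.succ_le_succ this.le
    exact mul_le_mul_of_nonneg_left h1 hqm0.le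
  have hqqinj : ∀ i j : Fin n, i ≠ j → qq i ≠ qq j := by
    intro i j hij h
    rw [hqq_at i, hqq_at j] at h
    have hn1 : ((n:ℝ)+1) ≠ 0 := ne_of_gt hnpos
    have hqm' : qm ≠ 0 := ne_of_gt hqm0
    have h2 : qm*((i.val:ℝ)+1) = qm*((j.val:ℝ)+1) := by
      have := congrArg (fun x => x * ((n:ℝ)+1)) h
      simpa [div_mul_cancel₀, hn1] using this
    have h3 := mul_left_cancel₀ hqm' h2
    have h4 : (i.val:ℝ) = j.val := by linarith only [h3]
    exact hij (Fin.ext (by exact_mod_cast h4))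
  obtain ⟨CC, hCC_def⟩ : ∃ f : Fin n → ℝ, f = fun i => σ i * A i / (1 + qq i^2) := ⟨_, rfl⟩
  have hCC_at : ∀ i, CC i = σ i * A i / (1 + qq i^2) := fun i => by rw [hCC_def]
  have hq2pos : ∀ i : Fin n, (0:ℝ) < 1 + qq i^2 := fun i => by positivity
  have hCCne : ∀ i, CC i ≠ 0 := by
    intro i
    rw [hCC_at i]
    exact div_ne_zero (mul_ne_zero (hσne i) (ne_of_gt (hpos i))) (ne_of_gt (hq2pos i))
  obtain ⟨EY, hEY_def⟩ : ∃ x:ℝ, x = ∑ i ∈ K, CC i * (1 - qq i^2) := ⟨_, rfl⟩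
  obtain ⟨EZ, hEZ_def⟩ : ∃ x:ℝ, x = ∑ i ∈ K, CC i * (2*qq i) := ⟨_, rfl⟩
  obtain ⟨TY, hTY_def⟩ : ∃ x:ℝ, x = s - EY := ⟨_, rfl⟩
  obtain ⟨TZ, hTZ_def⟩ : ∃ x:ℝ, x = -EZ := ⟨_, rfl⟩
  -- slop bounds
  have hslop1 : |TY - v'| ≤ δ := by
    have h1 : TY - v' = ∑ i ∈ K, (σ i * A i * (2*qq i^2/(1+qq i^2))) := by
      rw [hTY_def, hv'_def, hEY_def, hSg_def]
      rw [show s - (∑ i ∈ K, CC i * (1 - qq i^2)) - (s - ∑ i ∈ K, σ i * A i)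
          = ∑ i ∈ K, (σ i * A i - CC i * (1 - qq i^2)) by rw [Finset.sum_sub_distrib]; ring]
      refine Finset.sum_congr rfl (fun i _ => ?_)
      rw [hCC_at i]
      have h5 : (1 + qq i^2) ≠ 0 := ne_of_gt (hq2pos i)
      field_simp
      ring
    rw [h1]
    calc |∑ i ∈ K, (σ i * A i * (2*qq i^2/(1+qq i^2)))|
        ≤ ∑ i ∈ K, |σ i * A i * (2*qq i^2/(1+qq i^2))| := Finset.abs_sum_le_sum_abs _ _
      _ ≤ ∑ i ∈ K, A i * qm := by
          refine Finset.sum_le_sum (fun i _ => ?_)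
          rw [abs_mul, abs_mul, hσabs, one_mul, abs_of_pos (hpos i),
            abs_of_nonneg (by positivity)]
          have hq1 := hqqle i
          have hq0 := hqqpos i
          have hq2 : 2*qq i^2/(1+qq i^2) ≤ qm := by
            rw [div_le_iff₀ (hq2pos i)]
            have e1 : qq i * qq i ≤ qm * qm := mul_le_mul hq1 hq1 hq0.le hqm0.le
            have e2 : qm*qm ≤ qm*(1/2) := mul_le_mul_of_nonneg_left hqm1 hqm0.le
            have e3 : 0 ≤ qm*qq i^2 := mul_nonneg hqm0.le (sq_nonneg _)
            nlinarith only [e1, e2, e3]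
          exact mul_le_mul_of_nonneg_left hq2 (hpos i).le
      _ = D * qm := by rw [hD_def, Finset.sum_mul]
      _ ≤ δ := by
          have h2 : D * qm ≤ D * (δ/(2*D+2)) := mul_le_mul_of_nonneg_left hqm3 hD0
          have h3 : D * (δ/(2*D+2)) ≤ δ := by
            rw [mul_div_assoc', div_le_iff₀ (by linarith only [hD0] : (0:ℝ) < 2*D+2)]
            nlinarith only [mul_nonneg hD0 hδ0.le, hδ0]
          linarith only [h2, h3]
  have hslop2 : |TZ| ≤ δ := by
    rw [hTZ_def, abs_neg, hEZ_def]
    calc |∑ i ∈ K, CC i * (2*qq i)|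
        ≤ ∑ i ∈ K, |CC i * (2*qq i)| := Finset.abs_sum_le_sum_abs _ _
      _ ≤ ∑ i ∈ K, A i * (2*qm) := by
          refine Finset.sum_le_sum (fun i _ => ?_)
          rw [hCC_at i, abs_mul, abs_div, abs_mul, hσabs, one_mul, abs_of_pos (hpos i),
            abs_of_pos (hq2pos i), abs_of_pos (by linarith only [hqqpos i] : (0:ℝ) < 2*qq i)]
          have hq1 := hqqle i
          have hq0 := hqqpos i
          rw [div_mul_eq_mul_div, div_le_iff₀ (hq2pos i)]
          have e1 : A i * (2*qq i) ≤ A i * (2*qm) :=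
            mul_le_mul_of_nonneg_left (by linarith only [hq1]) (hpos i).le
          have e2 : 0 ≤ A i*(2*qm)*qq i^2 :=
            mul_nonneg (mul_nonneg (hpos i).le (by linarith only [hqm0])) (sq_nonneg _)
          nlinarith only [e1, e2]
      _ = D * (2*qm) := by rw [hD_def, Finset.sum_mul]
      _ ≤ δ := by
          have h2 : D * (2*qm) ≤ D * (2*(δ/(2*D+2))) :=
            mul_le_mul_of_nonneg_left (by linarith only [hqm3]) hD0
          have h3 : D * (2*(δ/(2*D+2))) ≤ δ := by
            rw [show D * (2*(δ/(2*D+2))) = (2*D)*δ/(2*D+2) by ring]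
            rw [div_le_iff₀ (by linarith only [hD0] : (0:ℝ) < 2*D+2)]
            nlinarith only [hδ0]
          linarith only [h2, h3]
  have hslop1' := abs_le.mp hslop1
  have hslop2' := abs_le.mp hslop2
  have hTYl : b1 - b2 + 3*η/4 ≤ TY := by linarith only [hv'b.1, hδ1, hslop1'.1]
  have hTYu : TY ≤ b1 + b2 - 3*η/4 := by linarith only [hv'b.2, hδ1, hslop1'.2]
  have hTY0 : 0 < TY := by linarith only [hTYl, h23, hη]
  obtain ⟨R, hR_def⟩ : ∃ x:ℝ, x = TY^2 + TZ^2 := ⟨_, rfl⟩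
  have hR0 : 0 < R := by
    rw [hR_def]; nlinarith only [mul_pos hTY0 hTY0, sq_nonneg TZ]
  have hc34 : (0:ℝ) < b1 - b2 + 3*η/4 := by linarith only [h23, hη]
  have hRlow : (b1 - b2 + 3*η/4)^2 ≤ R := by
    rw [hR_def]
    nlinarith only [mul_self_le_mul_self hc34.le hTYl, sq_nonneg TZ]
  have hRlow' : 9*η^2/16 ≤ R := by
    nlinarith only [hRlow, sq_nonneg (b1-b2),
      mul_nonneg (by linarith only [h23] : (0:ℝ) ≤ b1-b2) hη.le]
  have hRup : R ≤ (b1 + b2 - η/2)^2 := by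
    have h1 : |TZ| ≤ η/4 := le_trans hslop2 hδ1
    have h1' := abs_le.mp h1
    have h2 : TZ^2 ≤ (η/4)^2 := by nlinarith only [h1'.1, h1'.2]
    have e1 : TY*TY ≤ (b1+b2-3*η/4)*(b1+b2-3*η/4) := mul_self_le_mul_self hTY0.le hTYu
    have e3 : (0:ℝ) ≤ b1+b2-3*η/4 := le_trans hTY0.le hTYu
    rw [hR_def]
    nlinarith only [e1, h2, mul_nonneg e3 hη.le]
  have hRup' : R ≤ (b1+b2)^2 := by
    have e : (b1+b2-η/2)*(b1+b2-η/2) ≤ (b1+b2)*(b1+b2) :=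
      mul_self_le_mul_self (by linarith only [hηb2, hb2, h23, hb1]) (by linarith only [hη])
    nlinarith only [hRup, e]
  have hR0' : R ≠ 0 := ne_of_gt hR0
  obtain ⟨ah, hah_def⟩ : ∃ x:ℝ, x = (R + b1^2 - b2^2)/(2*R) := ⟨_, rfl⟩
  have hahR : 2*ah*R = R + b1^2 - b2^2 := by
    rw [hah_def]; field_simp
  have hah12 : 1/2 ≤ ah := by
    rw [hah_def, le_div_iff₀ (by linarith only [hR0])]
    nlinarith only [mul_self_le_mul_self hb2.le h23]
  have hahup : ah ≤ aU := by
    rw [hah_def, haU_def, div_le_iff₀ (by linarith only [hR0])]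
    have e0 : η^2 ≤ 2*R := by linarith only [hRlow', sq_nonneg η]
    have e1 : b1^2/η^2 * η^2 ≤ b1^2/η^2 * (2*R) := mul_le_mul_of_nonneg_left e0 hb1η
    have e2 : b1^2/η^2*η^2 = b1^2 := div_mul_cancel₀ _ (ne_of_gt (pow_pos hη 2))
    nlinarith only [e1, e2, sq_nonneg b2]
  have hahabs : |1 - ah| ≤ aU := by
    rw [abs_le]
    constructor
    · rw [haU_def] at hahup ⊢; linarith only [hahup, hb1η]
    · rw [haU_def]; linarith only [hah12, hb1η]
  -- beta
  obtain ⟨β, hβ_def⟩ : ∃ x:ℝ, x = Real.sqrt ((b1^2 - ah^2*R)/R) := ⟨_, rfl⟩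
  have hHeron : (b1^2 - ah^2*R) * (4*R) = ((b1+b2)^2 - R) * (R - (b1-b2)^2) := by
    have h : (b1^2 - ah^2*R)*(4*R) = 4*R*b1^2 - (2*ah*R)^2 := by ring
    rw [h, hahR]; ring
  have hfac1 : η*(b1+b2)/2 ≤ (b1+b2)^2 - R := by
    nlinarith only [hRup, mul_le_mul_of_nonneg_left hηb2 hη.le,
      mul_nonneg hη.le hb1.le, mul_nonneg hη.le hb2.le]
  have hfac2 : η^2/2 ≤ R - (b1-b2)^2 := by
    nlinarith only [hRlow, mul_nonneg hη.le (by linarith only [h23] : (0:ℝ) ≤ b1 - b2)]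
  have hpos1 : (0:ℝ) < η*(b1+b2)/2 := by
    have := mul_pos hη hbb0; linarith only [this]
  have hpos2 : (0:ℝ) < η^2/2 := by
    have := pow_pos hη 2; linarith only [this]
  have hprod : 0 < ((b1+b2)^2 - R) * (R - (b1-b2)^2) :=
    mul_pos (lt_of_lt_of_le hpos1 hfac1) (lt_of_lt_of_le hpos2 hfac2)
  have harg : 0 < b1^2 - ah^2*R := by
    by_contra hcon
    push_neg at hcon
    nlinarith only [hcon, hR0, hHeron, hprod]
  have hβsq : β^2 = (b1^2 - ah^2*R)/R := by
    rw [hβ_def]; exact Real.sq_sqrt (div_nonneg harg.le hR0.le)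
  have hβ2R : β^2 * R = b1^2 - ah^2*R := by
    rw [hβsq, div_mul_cancel₀ _ hR0']
  have hβ0 : 0 < β := by
    rw [hβ_def]; exact Real.sqrt_pos.mpr (div_pos harg hR0)
  have hβlow : bL ≤ β := by
    have hR2 : R*R ≤ (b1+b2)^2*(b1+b2)^2 := mul_self_le_mul_self hR0.le hRup'
    have hF : η^3*(b1+b2)/4 ≤ ((b1+b2)^2 - R)*(R - (b1-b2)^2) := by
      have := mul_le_mul hfac1 hfac2 hpos2.le (le_trans hpos1.le hfac1)
      nlinarith only [this]
    have hkey : 4*bL^2*(R*R) ≤ ((b1+b2)^2 - R)*(R - (b1-b2)^2) := by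
      have h1 : 4*bL^2*(R*R) ≤ 4*bL^2*((b1+b2)^2*(b1+b2)^2) :=
        mul_le_mul_of_nonneg_left hR2 (by nlinarith only [sq_nonneg bL])
      nlinarith only [h1, hbLsq, hF]
    have hmain2 : bL^2*R ≤ b1^2 - ah^2*R := by
      by_contra hcon
      push_neg at hcon
      nlinarith only [hcon, hR0, hHeron, hkey, mul_pos hR0 hR0]
    have h2 : bL^2 ≤ (b1^2 - ah^2*R)/R := by
      rw [le_div_iff₀ hR0]
      nlinarith only [hmain2]
    calc bL = Real.sqrt (bL^2) := by rw [Real.sqrt_sq hbL.le]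
      _ ≤ Real.sqrt ((b1^2 - ah^2*R)/R) := Real.sqrt_le_sqrt h2
      _ = β := by rw [hβ_def]
  have hTYR : TY^2 ≤ R := by rw [hR_def]; nlinarith only [sq_nonneg TZ]
  have hβTY : β*TY ≤ b1 := by
    have h1 : (β*TY)^2 ≤ b1^2 := by
      have h2 : β^2*TY^2 ≤ β^2*R := mul_le_mul_of_nonneg_left hTYR (sq_nonneg β)
      nlinarith only [h2, hβ2R, mul_nonneg (sq_nonneg ah) hR0.le]
    nlinarith only [h1, mul_pos hβ0 hTY0, hb1]
  -- the closing pair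
  obtain ⟨w2Y, hw2Y_def⟩ : ∃ x:ℝ, x = ah*TY + β*TZ := ⟨_, rfl⟩
  obtain ⟨w2Z, hw2Z_def⟩ : ∃ x:ℝ, x = ah*TZ - β*TY := ⟨_, rfl⟩
  obtain ⟨w3Y, hw3Y_def⟩ : ∃ x:ℝ, x = TY - w2Y := ⟨_, rfl⟩
  obtain ⟨w3Z, hw3Z_def⟩ : ∃ x:ℝ, x = TZ - w2Z := ⟨_, rfl⟩
  have hβ2R' : β^2*(TY^2+TZ^2) = b1^2 - ah^2*(TY^2+TZ^2) := by rw [← hR_def]; exact hβ2R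
  have hahR' : 2*ah*(TY^2+TZ^2) = (TY^2+TZ^2) + b1^2 - b2^2 := by rw [← hR_def]; exact hahR
  have hw2n : w2Y^2 + w2Z^2 = b1^2 := by
    rw [hw2Y_def, hw2Z_def]; linear_combination hβ2R'
  have hw3n : w3Y^2 + w3Z^2 = b2^2 := by
    rw [hw3Y_def, hw3Z_def, hw2Y_def, hw2Z_def]; linear_combination hβ2R' - hahR'
  have hcross23 : w2Y*w3Z - w2Z*w3Y = β*(TY^2+TZ^2) := by
    rw [hw3Y_def, hw3Z_def, hw2Y_def, hw2Z_def]; ring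
  have hcross23pos : 0 < β*(TY^2+TZ^2) := by
    rw [← hR_def]; exact mul_pos hβ0 hR0
  -- margins in the Z coordinate
  have he2 : bL*(b1-b2+3*η/4) ≤ β*TY :=
    mul_le_mul hβlow hTYl hc34.le hβ0.le
  have he3 : aU*δ ≤ bL*η/4 := by
    have h1 : aU*δ ≤ aU*(bL*η/(4*(aU+1))) := mul_le_mul_of_nonneg_left hδ3 haU0.le
    have h2 : aU*(bL*η/(4*(aU+1))) ≤ bL*η/4 := by
      rw [mul_div_assoc', div_le_div_iff₀ (by linarith only [haU0]) (by norm_num : (0:ℝ) < 4)]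
      nlinarith only [mul_nonneg hbL.le hη.le]
    linarith only [h1, h2]
  have he1 : ah*TZ ≤ aU*δ := by
    nlinarith only [hah12, hahup, hslop2'.1, hslop2'.2, hδ0, haU0]
  have hw2Zm : w2Z ≤ -M := by
    rw [hw2Z_def, hM_def]
    nlinarith only [he1, he2, he3,
      mul_nonneg hbL.le (by linarith only [h23] : (0:ℝ) ≤ b1-b2),
      mul_nonneg hbL.le hη.le]
  have hahabs' := abs_le.mp hahabs
  have he1' : -(aU*δ) ≤ (1-ah)*TZ := by
    nlinarith only [mul_nonneg (by linarith only [hahabs'.2] : (0:ℝ) ≤ aU - (1-ah))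
        (by linarith only [hslop2'.2] : (0:ℝ) ≤ δ - TZ),
      mul_nonneg (by linarith only [hahabs'.1] : (0:ℝ) ≤ aU + (1-ah))
        (by linarith only [hslop2'.1] : (0:ℝ) ≤ δ + TZ)]
  have hw3Zm : M ≤ w3Z := by
    rw [hw3Z_def, hw2Z_def, hM_def]
    nlinarith only [he1', he2, he3,
      mul_nonneg hbL.le (by linarith only [h23] : (0:ℝ) ≤ b1-b2),
      mul_nonneg hbL.le hη.le]
  have hw2Yb : w2Y^2 ≤ b1^2 := by nlinarith only [hw2n, sq_nonneg w2Z]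
  have hw3Yb : w3Y^2 ≤ b2^2 := by nlinarith only [hw3n, sq_nonneg w3Z]
  -- cross bounds against the small vectors
  have hqmM : qm*(8*(b1+1)) ≤ M := by
    have := hqm2
    rw [le_div_iff₀ (by linarith only [hb1] : (0:ℝ) < 8*(b1+1))] at this
    exact this
  have hkey2 : ∀ j : Fin n, 0 < w2Y*(2*qq j) - w2Z*(1-qq j^2) := by
    intro j
    have hq0 := hqqpos j
    have hq1 := hqqle j
    have hq12 : qq j ≤ 1/2 := le_trans hq1 hqm1
    have hqsq : qq j^2 ≤ 1/4 := by nlinarith only [hq0, hq12]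
    have habs1 : w2Y ≤ b1 := by nlinarith only [hw2Yb, hb1]
    have habs2 : -b1 ≤ w2Y := by nlinarith only [hw2Yb, hb1]
    have A1 : -(M/4) ≤ w2Y*(2*qq j) := by
      have p1 : 0 ≤ (w2Y + b1) * (2*qq j) :=
        mul_nonneg (by linarith only [habs2]) (by linarith only [hq0])
      have p2 : 0 ≤ (qm - qq j) * b1 :=
        mul_nonneg (by linarith only [hq1]) hb1.le
      nlinarith only [p1, p2, hqmM, hqm0]
    have hw2Zm' : M ≤ -w2Z := by linarith only [hw2Zm]
    have B1 : M*(3/4) ≤ (-w2Z)*(1-qq j^2) :=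
      mul_le_mul hw2Zm' (by linarith only [hqsq]) (by norm_num)
        (by linarith only [hw2Zm', hM0])
    nlinarith only [A1, B1, hM0]
  have hkey3 : ∀ j : Fin n, w3Y*(2*qq j) - w3Z*(1-qq j^2) < 0 := by
    intro j
    have hq0 := hqqpos j
    have hq1 := hqqle j
    have hq12 : qq j ≤ 1/2 := le_trans hq1 hqm1
    have hqsq : qq j^2 ≤ 1/4 := by nlinarith only [hq0, hq12]
    have habs1 : w3Y ≤ b2 := by nlinarith only [hw3Yb, hb2]
    have A1 : w3Y*(2*qq j) ≤ M/4 := by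
      have p1 : 0 ≤ (b2 - w3Y) * (2*qq j) :=
        mul_nonneg (by linarith only [habs1]) (by linarith only [hq0])
      have p2 : 0 ≤ (qm - qq j) * b2 :=
        mul_nonneg (by linarith only [hq1]) hb2.le
      nlinarith only [p1, p2, hqmM, hqm0, h23, mul_nonneg hqm0.le (by linarith only [h23] : (0:ℝ) ≤ b1 - b2)]
    have B1 : M*(3/4) ≤ w3Z*(1-qq j^2) :=
      mul_le_mul hw3Zm (by linarith only [hqsq]) (by norm_num)
        (by linarith only [hw3Zm, hM0])
    nlinarith only [A1, B1, hM0]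
  -- the xy-plane triangle
  obtain ⟨yy, hyy_def⟩ : ∃ x:ℝ, x = (a1^2 - a0^2 - s^2)/(2*s) := ⟨_, rfl⟩
  have hs0ne : (2*s) ≠ 0 := by
    have := hs0'; intro h; nlinarith only [this, h]
  have hyy2s : 2*s*yy = a1^2 - a0^2 - s^2 := by
    rw [hyy_def, mul_div_assoc']
    exact mul_div_cancel_left₀ _ hs0ne
  have hxarg : 0 < a0^2 - yy^2 := by
    have hkey : (a0^2 - yy^2)*(4*s^2) =
        (s+a0-a1)*(s+a0+a1)*(a1+s-a0)*(a0+a1-s) := by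
      have h : (a0^2 - yy^2)*(4*s^2) = 4*s^2*a0^2 - (2*s*yy)^2 := by ring
      rw [h, hyy2s]; ring
    have f1 : 0 < s+a0-a1 := by linarith only [hs0', h01]
    have f2 : 0 < s+a0+a1 := by linarith only [hs0', ha0, ha1]
    have f3 : 0 < a1+s-a0 := by linarith only [hsa]
    have f4 : 0 < a0+a1-s := by linarith only [hsb]
    have hrhs : 0 < (s+a0-a1)*(s+a0+a1)*(a1+s-a0)*(a0+a1-s) :=
      mul_pos (mul_pos (mul_pos f1 f2) f3) f4
    have h4s : 0 < 4*s^2 := by nlinarith only [hs0']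
    by_contra hcon
    push_neg at hcon
    nlinarith only [hkey, hrhs, h4s, hcon]
  obtain ⟨xx, hxx_def⟩ : ∃ x:ℝ, x = Real.sqrt (a0^2 - yy^2) := ⟨_, rfl⟩
  have hxx0 : 0 < xx := by rw [hxx_def]; exact Real.sqrt_pos.mpr hxarg
  have hxxsq : xx^2 = a0^2 - yy^2 := by rw [hxx_def]; exact Real.sq_sqrt hxarg.le
  -- the vectors
  obtain ⟨XF, hXF_def⟩ : ∃ f : Fin n → ℝ,
      f = fun i => if i = i0 then xx else if i = i1 then -xx else 0 := ⟨_, rfl⟩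
  obtain ⟨YF, hYF_def⟩ : ∃ f : Fin n → ℝ,
      f = fun i => if i = i0 then yy else if i = i1 then -s-yy else if i = i2 then w2Y
        else if i = i3 then w3Y else CC i * (1 - qq i^2) := ⟨_, rfl⟩
  obtain ⟨ZF, hZF_def⟩ : ∃ f : Fin n → ℝ,
      f = fun i => if i = i0 then 0 else if i = i1 then 0 else if i = i2 then w2Z
        else if i = i3 then w3Z else CC i * (2*qq i) := ⟨_, rfl⟩
  have hXF_at : ∀ i, XF i = if i = i0 then xx else if i = i1 then -xx else 0 :=
    fun i => by rw [hXF_def]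
  have hYF_at : ∀ i, YF i = if i = i0 then yy else if i = i1 then -s-yy
      else if i = i2 then w2Y else if i = i3 then w3Y else CC i * (1 - qq i^2) :=
    fun i => by rw [hYF_def]
  have hZF_at : ∀ i, ZF i = if i = i0 then 0 else if i = i1 then 0
      else if i = i2 then w2Z else if i = i3 then w3Z else CC i * (2*qq i) :=
    fun i => by rw [hZF_def]
  have hX0 : XF i0 = xx := by rw [hXF_at, if_pos rfl]
  have hX1 : XF i1 = -xx := by rw [hXF_at, if_neg (Ne.symm hd01), if_pos rfl]
  have hXo : ∀ i, i ≠ i0 → i ≠ i1 → XF i = 0 := by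
    intro i h1 h2; rw [hXF_at, if_neg h1, if_neg h2]
  have hY0 : YF i0 = yy := by rw [hYF_at, if_pos rfl]
  have hY1 : YF i1 = -s-yy := by rw [hYF_at, if_neg (Ne.symm hd01), if_pos rfl]
  have hY2 : YF i2 = w2Y := by
    rw [hYF_at, if_neg (Ne.symm hd02), if_neg (Ne.symm hd12), if_pos rfl]
  have hY3 : YF i3 = w3Y := by
    rw [hYF_at, if_neg (Ne.symm hd03), if_neg (Ne.symm hd13), if_neg (Ne.symm hd23), if_pos rfl]
  have hYK : ∀ i ∈ K, YF i = CC i * (1 - qq i^2) := by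
    intro i hi
    obtain ⟨e0, e1, e2, e3⟩ := hKne i hi
    rw [hYF_at, if_neg e0, if_neg e1, if_neg e2, if_neg e3]
  have hZ0 : ZF i0 = 0 := by rw [hZF_at, if_pos rfl]
  have hZ1 : ZF i1 = 0 := by rw [hZF_at, if_neg (Ne.symm hd01), if_pos rfl]
  have hZ2 : ZF i2 = w2Z := by
    rw [hZF_at, if_neg (Ne.symm hd02), if_neg (Ne.symm hd12), if_pos rfl]
  have hZ3 : ZF i3 = w3Z := by
    rw [hZF_at, if_neg (Ne.symm hd03), if_neg (Ne.symm hd13), if_neg (Ne.symm hd23), if_pos rfl]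
  have hZK : ∀ i ∈ K, ZF i = CC i * (2*qq i) := by
    intro i hi
    obtain ⟨e0, e1, e2, e3⟩ := hKne i hi
    rw [hZF_at, if_neg e0, if_neg e1, if_neg e2, if_neg e3]
  obtain ⟨v, hv_def⟩ : ∃ g : Fin n → EuclideanSpace ℝ (Fin 3),
      g = fun i => !₂[XF i, YF i, ZF i] := ⟨_, rfl⟩
  have hva : ∀ i, v i 0 = XF i ∧ v i 1 = YF i ∧ v i 2 = ZF i := by
    intro i; rw [hv_def]; exact ⟨rfl, rfl, rfl⟩
  have hext : ∀ (u w : EuclideanSpace ℝ (Fin 3)), u 0 = w 0 → u 1 = w 1 → u 2 = w 2 → u = w := by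
    intro u w h0 h1 h2
    ext k
    fin_cases k
    · exact h0
    · exact h1
    · exact h2
  have hclass : ∀ i : Fin n, i = i0 ∨ i = i1 ∨ i = i2 ∨ i = i3 ∨ i ∈ K := by
    intro i
    by_cases h4 : 4 ≤ i.val
    · exact Or.inr (Or.inr (Or.inr (Or.inr (by rw [hK_def]; simp [h4]))))
    · push_neg at h4
      have h5 : i.val = 0 ∨ i.val = 1 ∨ i.val = 2 ∨ i.val = 3 := by omega
      rcases h5 with h | h | h | h
      · exact Or.inl (Fin.ext h)
      · exact Or.inr (Or.inl (Fin.ext h))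
      · exact Or.inr (Or.inr (Or.inl (Fin.ext h)))
      · exact Or.inr (Or.inr (Or.inr (Or.inl (Fin.ext h))))
  -- norms
  have hnorm3 : ∀ (u : EuclideanSpace ℝ (Fin 3)),
      ‖u‖ = Real.sqrt (u 0^2 + u 1^2 + u 2^2) := by
    intro u
    rw [EuclideanSpace.norm_eq, Fin.sum_univ_three]
    simp [sq_abs]
  have hnormv : ∀ i, ‖v i‖ = Real.sqrt (XF i^2 + YF i^2 + ZF i^2) := by
    intro i
    rw [hnorm3 (v i), (hva i).1, (hva i).2.1, (hva i).2.2]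
  have hnorm : ∀ i, ‖v i‖ = A i := by
    intro i
    rw [hnormv i]
    rcases hclass i with rfl | rfl | rfl | rfl | hiK
    · rw [hX0, hY0, hZ0, show xx^2 + yy^2 + 0^2 = a0^2 by linear_combination hxxsq,
        ha0_def]
      exact Real.sqrt_sq (hpos i0).le
    · rw [hX1, hY1, hZ1,
        show (-xx)^2 + (-s-yy)^2 + 0^2 = a1^2 by linear_combination hxxsq + hyy2s,
        ha1_def]
      exact Real.sqrt_sq (hpos i1).le
    · rw [hXo i2 (Ne.symm hd02) (Ne.symm hd12), hY2, hZ2,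
        show (0:ℝ)^2 + w2Y^2 + w2Z^2 = b1^2 by linear_combination hw2n, hb1_def]
      exact Real.sqrt_sq (hpos i2).le
    · rw [hXo i3 (Ne.symm hd03) (Ne.symm hd13), hY3, hZ3,
        show (0:ℝ)^2 + w3Y^2 + w3Z^2 = b2^2 by linear_combination hw3n, hb2_def]
      exact Real.sqrt_sq (hpos i3).le
    · obtain ⟨e0, e1, e2, e3⟩ := hKne i hiK
      rw [hXo i e0 e1, hYK i hiK, hZK i hiK]
      have hne : (1 + qq i^2) ≠ 0 := ne_of_gt (hq2pos i)
      have hsq : (0:ℝ)^2 + (CC i * (1 - qq i^2))^2 + (CC i * (2*qq i))^2 = (A i)^2 := by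
        rw [hCC_at i]
        field_simp
        linear_combination (A i^2*(1+qq i^2)^2) * hσsq i
      rw [hsq]
      exact Real.sqrt_sq (hpos i).le
  -- sum
  have hsumX : ∑ i, XF i = 0 := by
    rw [hsplit XF, hX0, hX1, hXo i2 (Ne.symm hd02) (Ne.symm hd12),
      hXo i3 (Ne.symm hd03) (Ne.symm hd13),
      Finset.sum_eq_zero (fun i hi => hXo i (hKne i hi).1 (hKne i hi).2.1)]
    ring
  have hsumY : ∑ i, YF i = 0 := by
    rw [hsplit YF, hY0, hY1, hY2, hY3, Finset.sum_congr rfl (fun i hi => hYK i hi),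
      ← hEY_def, hw3Y_def, hTY_def]
    ring
  have hsumZ : ∑ i, ZF i = 0 := by
    rw [hsplit ZF, hZ0, hZ1, hZ2, hZ3, Finset.sum_congr rfl (fun i hi => hZK i hi),
      ← hEZ_def, hw3Z_def, hTZ_def]
    ring
  have hsum : (∑ i, v i) = 0 := by
    have hcoord : ∀ k : Fin 3, (∑ i, v i) k = ∑ i, v i k :=
      fun k => by rw [WithLp.ofLp_sum, Finset.sum_apply]
    refine hext _ _ ?_ ?_ ?_
    · rw [hcoord 0, Finset.sum_congr rfl (fun i _ => (hva i).1)]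
      exact hsumX
    · rw [hcoord 1, Finset.sum_congr rfl (fun i _ => (hva i).2.1)]
      exact hsumY
    · rw [hcoord 2, Finset.sum_congr rfl (fun i _ => (hva i).2.2)]
      exact hsumZ
  -- no two positively proportional
  have hprop : ∀ i j, i ≠ j → ¬ PosProportional (v i) (v j) := by
    rintro i j hij ⟨c, hc0, hEq⟩
    have hcmp : ∀ k, v i k = c * v j k := by
      intro k; rw [hEq]; rfl
    have hcmp0 := hcmp 0
    have hcmp1 := hcmp 1
    have hcmp2 := hcmp 2
    rw [(hva i).1, (hva j).1] at hcmp0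
    rw [(hva i).2.1, (hva j).2.1] at hcmp1
    rw [(hva i).2.2, (hva j).2.2] at hcmp2
    have hcxx : 0 < c * xx := mul_pos hc0 hxx0
    rcases hclass i with rfl | rfl | rfl | rfl | hiK <;>
      rcases hclass j with rfl | rfl | rfl | rfl | hjK
    · exact hij rfl
    · rw [hX0, hX1] at hcmp0
      nlinarith only [hcmp0, hxx0, hc0, hcxx]
    · rw [hX0, hXo i2 (Ne.symm hd02) (Ne.symm hd12)] at hcmp0
      nlinarith only [hcmp0, hxx0]
    · rw [hX0, hXo i3 (Ne.symm hd03) (Ne.symm hd13)] at hcmp0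
      nlinarith only [hcmp0, hxx0]
    · rw [hX0, hXo j (hKne j hjK).1 (hKne j hjK).2.1] at hcmp0
      nlinarith only [hcmp0, hxx0]
    · rw [hX1, hX0] at hcmp0
      nlinarith only [hcmp0, hxx0, hc0, hcxx]
    · exact hij rfl
    · rw [hX1, hXo i2 (Ne.symm hd02) (Ne.symm hd12)] at hcmp0
      nlinarith only [hcmp0, hxx0]
    · rw [hX1, hXo i3 (Ne.symm hd03) (Ne.symm hd13)] at hcmp0
      nlinarith only [hcmp0, hxx0]
    · rw [hX1, hXo j (hKne j hjK).1 (hKne j hjK).2.1] at hcmp0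
      nlinarith only [hcmp0, hxx0]
    · rw [hXo i2 (Ne.symm hd02) (Ne.symm hd12), hX0] at hcmp0
      nlinarith only [hcmp0, hcxx]
    · rw [hXo i2 (Ne.symm hd02) (Ne.symm hd12), hX1] at hcmp0
      nlinarith only [hcmp0, hcxx]
    · exact hij rfl
    · rw [hY2, hY3] at hcmp1
      rw [hZ2, hZ3] at hcmp2
      have h0 : β*(TY^2+TZ^2) = 0 := by
        rw [← hcross23, hcmp1, hcmp2]; ring
      linarith only [h0, hcross23pos]
    · rw [hY2, hYK j hjK] at hcmp1
      rw [hZ2, hZK j hjK] at hcmp2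
      have h := hkey2 j
      rw [hcmp1, hcmp2] at h
      linarith only [h]
    · rw [hXo i3 (Ne.symm hd03) (Ne.symm hd13), hX0] at hcmp0
      nlinarith only [hcmp0, hcxx]
    · rw [hXo i3 (Ne.symm hd03) (Ne.symm hd13), hX1] at hcmp0
      nlinarith only [hcmp0, hcxx]
    · rw [hY3, hY2] at hcmp1
      rw [hZ3, hZ2] at hcmp2
      have h0 : β*(TY^2+TZ^2) = 0 := by
        rw [← hcross23, hcmp1, hcmp2]; ring
      linarith only [h0, hcross23pos]
    · exact hij rfl
    · rw [hY3, hYK j hjK] at hcmp1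
      rw [hZ3, hZK j hjK] at hcmp2
      have h := hkey3 j
      rw [hcmp1, hcmp2] at h
      linarith only [h]
    · rw [hXo i (hKne i hiK).1 (hKne i hiK).2.1, hX0] at hcmp0
      nlinarith only [hcmp0, hcxx]
    · rw [hXo i (hKne i hiK).1 (hKne i hiK).2.1, hX1] at hcmp0
      nlinarith only [hcmp0, hcxx]
    · rw [hYK i hiK, hY2] at hcmp1
      rw [hZK i hiK, hZ2] at hcmp2
      have hzero : c * (w2Y*(2*qq i) - w2Z*(1-qq i^2)) = 0 := by
        linear_combination (-(2*qq i))*hcmp1 + (1-qq i^2)*hcmp2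
      rcases mul_eq_zero.mp hzero with h | h
      · exact absurd h hc0.ne'
      · exact absurd h (hkey2 i).ne'
    · rw [hYK i hiK, hY3] at hcmp1
      rw [hZK i hiK, hZ3] at hcmp2
      have hzero : c * (w3Y*(2*qq i) - w3Z*(1-qq i^2)) = 0 := by
        linear_combination (-(2*qq i))*hcmp1 + (1-qq i^2)*hcmp2
      rcases mul_eq_zero.mp hzero with h | h
      · exact absurd h hc0.ne'
      · exact absurd h (hkey3 i).ne
    · rw [hYK i hiK, hYK j hjK] at hcmp1
      rw [hZK i hiK, hZK j hjK] at hcmp2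
      have hzero : CC i * (2*((qq j - qq i)*(1+qq i*qq j))) = 0 := by
        linear_combination (2*qq j)*hcmp1 - (1-qq j^2)*hcmp2
      rcases mul_eq_zero.mp hzero with h | h
      · exact absurd h (hCCne i)
      · have h5 : (qq j - qq i)*(1+qq i*qq j) = 0 := by linarith only [h]
        rcases mul_eq_zero.mp h5 with h6 | h6
        · exact hqqinj i j hij (by linarith only [h6])
        · nlinarith only [h6, mul_pos (hqqpos i) (hqqpos j)]
  -- span
  have hmem : ∀ i, v i ∈ Submodule.span ℝ (Set.range v) :=
    fun i => Submodule.subset_span ⟨i, rfl⟩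
  have hCr : β*(TY^2+TZ^2) ≠ 0 := ne_of_gt hcross23pos
  have hsne : s ≠ 0 := ne_of_gt hs0'
  have hxne : xx ≠ 0 := ne_of_gt hxx0
  have hsingle1 : EuclideanSpace.single (1 : Fin 3) (1:ℝ) = (-(1/s)) • (v i0 + v i1) := by
    refine hext _ _ ?_ ?_ ?_
    · show _ = (-(1/s)) * (v i0 0 + v i1 0)
      rw [(hva i0).1, (hva i1).1, hX0, hX1]
      simp [EuclideanSpace.single_apply]
    · show _ = (-(1/s)) * (v i0 1 + v i1 1)
      rw [(hva i0).2.1, (hva i1).2.1, hY0, hY1]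
      rw [EuclideanSpace.single_apply, if_pos rfl]
      field_simp
      ring
    · show _ = (-(1/s)) * (v i0 2 + v i1 2)
      rw [(hva i0).2.2, (hva i1).2.2, hZ0, hZ1]
      simp [EuclideanSpace.single_apply]
  have he1 : EuclideanSpace.single (1 : Fin 3) (1:ℝ) ∈ Submodule.span ℝ (Set.range v) := by
    rw [hsingle1]
    exact Submodule.smul_mem _ _ (Submodule.add_mem _ (hmem i0) (hmem i1))
  have hsingle2 : EuclideanSpace.single (2 : Fin 3) (1:ℝ)
      = (-w3Y/(β*(TY^2+TZ^2))) • v i2 + (w2Y/(β*(TY^2+TZ^2))) • v i3 := by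
    refine hext _ _ ?_ ?_ ?_
    · show _ = (-w3Y/(β*(TY^2+TZ^2))) * v i2 0 + (w2Y/(β*(TY^2+TZ^2))) * v i3 0
      rw [(hva i2).1, (hva i3).1, hXo i2 (Ne.symm hd02) (Ne.symm hd12),
        hXo i3 (Ne.symm hd03) (Ne.symm hd13)]
      simp [EuclideanSpace.single_apply]
    · show _ = (-w3Y/(β*(TY^2+TZ^2))) * v i2 1 + (w2Y/(β*(TY^2+TZ^2))) * v i3 1
      rw [(hva i2).2.1, (hva i3).2.1, hY2, hY3]
      rw [EuclideanSpace.single_apply, if_neg (by decide : (1:Fin 3) ≠ 2)]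
      field_simp
      ring
    · show _ = (-w3Y/(β*(TY^2+TZ^2))) * v i2 2 + (w2Y/(β*(TY^2+TZ^2))) * v i3 2
      rw [(hva i2).2.2, (hva i3).2.2, hZ2, hZ3]
      rw [EuclideanSpace.single_apply, if_pos rfl]
      rw [div_mul_eq_mul_div, div_mul_eq_mul_div, ← add_div,
        eq_comm, div_eq_iff hCr]
      linear_combination hcross23
  have he2 : EuclideanSpace.single (2 : Fin 3) (1:ℝ) ∈ Submodule.span ℝ (Set.range v) := by
    rw [hsingle2]
    exact Submodule.add_mem _ (Submodule.smul_mem _ _ (hmem i2))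
      (Submodule.smul_mem _ _ (hmem i3))
  have hsingle0 : EuclideanSpace.single (0 : Fin 3) (1:ℝ)
      = (1/xx) • v i0 + (-(yy/xx)) • EuclideanSpace.single (1 : Fin 3) (1:ℝ) := by
    refine hext _ _ ?_ ?_ ?_
    · show _ = (1/xx) * v i0 0 + (-(yy/xx)) * EuclideanSpace.single (1 : Fin 3) (1:ℝ) 0
      rw [(hva i0).1, hX0]
      rw [EuclideanSpace.single_apply, if_pos rfl, EuclideanSpace.single_apply,
        if_neg (by decide : (0:Fin 3) ≠ 1)]
      field_simp
      ring
    · show _ = (1/xx) * v i0 1 + (-(yy/xx)) * EuclideanSpace.single (1 : Fin 3) (1:ℝ) 1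
      rw [(hva i0).2.1, hY0]
      rw [EuclideanSpace.single_apply, if_neg (by decide : (1:Fin 3) ≠ 0),
        EuclideanSpace.single_apply, if_pos rfl]
      field_simp
      ring
    · show _ = (1/xx) * v i0 2 + (-(yy/xx)) * EuclideanSpace.single (1 : Fin 3) (1:ℝ) 2
      rw [(hva i0).2.2, hZ0]
      rw [EuclideanSpace.single_apply, if_neg (by decide : (2:Fin 3) ≠ 0),
        EuclideanSpace.single_apply, if_neg (by decide : (2:Fin 3) ≠ 1)]
      ring
  have he0 : EuclideanSpace.single (0 : Fin 3) (1:ℝ) ∈ Submodule.span ℝ (Set.range v) := by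
    rw [hsingle0]
    exact Submodule.add_mem _ (Submodule.smul_mem _ _ (hmem i0))
      (Submodule.smul_mem _ _ he1)
  have hspan : Submodule.span ℝ (Set.range v) = ⊤ := by
    rw [eq_top_iff]
    intro u _
    have hu : u = u 0 • EuclideanSpace.single (0:Fin 3) (1:ℝ)
        + u 1 • EuclideanSpace.single (1:Fin 3) (1:ℝ)
        + u 2 • EuclideanSpace.single (2:Fin 3) (1:ℝ) := by
      ext k
      fin_cases k <;> simp [EuclideanSpace.single_apply]
    rw [hu]
    exact Submodule.add_mem _ (Submodule.add_mem _ (Submodule.smul_mem _ _ he0)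
      (Submodule.smul_mem _ _ he1)) (Submodule.smul_mem _ _ he2)
  -- planes
  have hplane : ∀ i, v i 2 = 0 ∨ v i 0 = 0 := by
    intro i
    rcases hclass i with rfl | rfl | rfl | rfl | hiK
    · exact Or.inl ((hva i0).2.2.trans hZ0)
    · exact Or.inl ((hva i1).2.2.trans hZ1)
    · exact Or.inr ((hva i2).1.trans (hXo i2 (Ne.symm hd02) (Ne.symm hd12)))
    · exact Or.inr ((hva i3).1.trans (hXo i3 (Ne.symm hd03) (Ne.symm hd13)))
    · exact Or.inr ((hva i).1.trans (hXo i (hKne i hiK).1 (hKne i hiK).2.1))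
  exact ⟨v, hnorm, hsum, hprop, hspan, hplane⟩
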